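/- arXiv:1208.5542 — 2 statements merged into one kernel-verified Lean document; each statement's English description precedes it below -/
import Mathlib

section
/- Let R be a commutative semiring, let m be a finite index type, let p be a finite index type of processors, and for each j : p let n j be a finite index type. Let A be an m × (Σ j, n j) matrix over R (a row block partitioned into column sub-blocks A_j, where A_j is the submatrix of A on columns {⟨j, k⟩ : k ∈ n j}), and let f be a (Σ j, n j)-vector with pieces f_j : n j → R given by f_j k = f ⟨j, k⟩. For each j define the directory vector V_j : n j → R by V_j k = 1 if column k of the sub-block A_j contains at least one nonzero entry, and V_j k = 0 otherwise. Then Σ_{j} A_j ⊗ (f_j ⊙ V_j) = A ⊗ f. (Paper's Lemma 2: the sieved block computation t_i = Σ_j A_{i,j} ⊗ f_{i,j} with f_{i,j} = f_j ⊙ V_{j,i} is equivalent to the unsieved computation t_i = A_i ⊗ f, establishing the correctness of the directory-based BFS algorithm.) -/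
/-- Paper's Lemma 2: the sieved block computation `∑ j, A_j ⊗ (f_j ⊙ V_j)`
equals the unsieved computation `A ⊗ f`, where `A_j` is the sub-block of the
block row `A` on the columns of processor `j`, `f_j` is the corresponding piece
of `f`, and `V_j` is the column directory vector of `A_j`. -/
theorem sum_mulVec_sieved_blocks {R : Type*} [CommSemiring R]
    {m p : Type*} [Fintype m] [Fintype p] {n : p → Type*} [∀ j, Fintype (n j)]
    (A : Matrix m ((j : p) × n j) R) (f : ((j : p) × n j) → R)
    (Asub : (j : p) → Matrix m (n j) R)
    (hAsub : ∀ j i k, Asub j i k = A i ⟨j, k⟩)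
    (fsub : (j : p) → n j → R)
    (hfsub : ∀ j k, fsub j k = f ⟨j, k⟩)
    (V : (j : p) → n j → R)
    (hV1 : ∀ j k, (∃ i, Asub j i k ≠ 0) → V j k = 1)
    (hV0 : ∀ j k, ¬ (∃ i, Asub j i k ≠ 0) → V j k = 0) :
    (∑ j, (Asub j).mulVec (fun k => fsub j k * V j k)) = A.mulVec f := by
  funext i
  simp only [Finset.sum_apply, Matrix.mulVec, dotProduct]
  rw [← Finset.univ_sigma_univ, Finset.sum_sigma]
  refine Finset.sum_congr rfl fun j _ => Finset.sum_congr rfl fun k _ => ?_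
  by_cases h : ∃ i', Asub j i' k ≠ 0
  · rw [hV1 j k h, hAsub, hfsub, mul_one]
  · push_neg at h
    simp [hV0 j k (by push_neg; exact h), ← hAsub, h i]
end

section
/- Let G be a simple graph on a finite vertex type and let s be a vertex. Define the BFS frontier sets F : ℕ → Set V by F 0 = {s} and F (k+1) = {v | ∃ u ∈ F k, G.Adj u v} \ (⋃ i ≤ k, F i). Then for every k, the frontier at level k is exactly the set of vertices at graph distance k from s: v ∈ F k if and only if G.Reachable s v and G.dist s v = k. (This is the correctness of the level-synchronous BFS frontier recurrence f_{L(k+1)} = Aᵀ ⊗ f_{Lk} ⊙ complement(π_k) underlying all three algorithms in the paper.) -/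
/-- Correctness of the level-synchronous BFS frontier recurrence: the frontier
at level `k` is exactly the set of vertices at graph distance `k` from the
source `s`. -/
theorem bfs_frontier_eq_dist_level {V : Type*} [Fintype V]
    (G : SimpleGraph V) (s : V) (F : ℕ → Set V)
    (hF0 : F 0 = {s})
    (hFsucc : ∀ k, F (k + 1) =
      {v | ∃ u ∈ F k, G.Adj u v} \ (⋃ i ≤ k, F i)) :
    ∀ k v, v ∈ F k ↔ G.Reachable s v ∧ G.dist s v = k := by
  intro k
  induction k using Nat.strong_induction_on with
  | _ k ih =>
    match k with
    | 0 =>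
      intro v
      rw [hF0]
      constructor
      · rintro rfl
        exact ⟨SimpleGraph.Reachable.refl v, SimpleGraph.dist_self⟩
      · rintro ⟨hr, hd⟩
        have := hr.dist_eq_zero_iff.mp hd
        simp [this.symm]
    | k + 1 =>
      intro v
      rw [hFsucc]
      constructor
      · rintro ⟨⟨u, huF, hadj⟩, hnot⟩
        obtain ⟨hur, hud⟩ := (ih k (Nat.lt_succ_self k) u).mp huF
        have hrv : G.Reachable s v := hur.trans hadj.reachable
        have hnot' : ∀ i ≤ k, v ∉ F i := by
          intro i hi hvi
          exact hnot (Set.mem_iUnion.mpr ⟨i, Set.mem_iUnion.mpr ⟨hi, hvi⟩⟩)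
        -- dist ≤ k+1
        obtain ⟨p, hp⟩ := hur.exists_walk_length_eq_dist
        have hle : G.dist s v ≤ k + 1 := by
          have := SimpleGraph.dist_le (p.concat hadj)
          rwa [SimpleGraph.Walk.length_concat, hp, hud] at this
        -- dist ≥ k+1
        have hge : ¬ G.dist s v ≤ k := by
          intro hle'
          exact (fun h => hnot' _ hle' h)
            ((ih (G.dist s v) (Nat.lt_succ_of_le hle') v).mpr ⟨hrv, rfl⟩)
        exact ⟨hrv, by omega⟩
      · rintro ⟨hr, hd⟩
        obtain ⟨p, hp⟩ := hr.exists_walk_length_eq_dist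
        rw [hd] at hp
        -- extract last edge: use reverse
        obtain ⟨u, q, hadj, hq⟩ : ∃ u, ∃ q : G.Walk s u, G.Adj u v ∧ q.length = k := by
          cases hpr : p.reverse with
          | nil =>
            exfalso
            have := congrArg SimpleGraph.Walk.length hpr
            simp [hp] at this
          | cons h q =>
            refine ⟨_, q.reverse, h.symm, ?_⟩
            have := congrArg SimpleGraph.Walk.length hpr
            simp [hp] at this
            simpa using this.symm
        have hud_le : G.dist s u ≤ k := hq ▸ SimpleGraph.dist_le q
        have hud_ge : k ≤ G.dist s u := by
          obtain ⟨r, hr'⟩ := q.reachable.exists_walk_length_eq_dist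
          have := SimpleGraph.dist_le (r.concat hadj)
          rw [SimpleGraph.Walk.length_concat, hr', hd] at this
          omega
        have huF : u ∈ F k := (ih k (Nat.lt_succ_self k) u).mpr
          ⟨q.reachable, le_antisymm hud_le hud_ge⟩
        refine ⟨⟨u, huF, hadj⟩, ?_⟩
        intro hmem
        obtain ⟨i, hi⟩ := Set.mem_iUnion.mp hmem
        obtain ⟨hik, hvi⟩ := Set.mem_iUnion.mp hi
        have := ((ih i (Nat.lt_succ_of_le hik) v).mp hvi).2
        omega
end
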